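/- arXiv:1003.4903 — 2 statements merged into one kernel-verified Lean document; each statement's English description precedes it below -/
import Mathlib

section
/- Let d ≥ 1, γ0 > 1, c_v > 0, b̃ ≥ 0, and set ν = (γ0+1)/(γ0−1). For π ≥ 0, s ∈ ℝ, u ∈ ℝ^d and ξ ∈ ℝ^d, let μ = ((γ0−1)/2)·π·(1 + b̃·exp(−s/(γ0 c_v))·π^{ν−1}) and define the (d+2)×(d+2) real matrix A(ξ) in block form with first row (u·ξ, μ ξᵀ, 0), middle block (μ·exp(s/(γ0 c_v))·ξ, (u·ξ)I_d, 0) and last row (0, 0, u·ξ). Let S = Diag(1, exp(−s/(γ0 c_v)), …, exp(−s/(γ0 c_v)), 1). Then S·A(ξ) is symmetric and S is symmetric positive definite; in particular this holds even when π = 0 (i.e. when the pressure and density vanish). -/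
/-- Symmetrisation of the Van der Waals–Euler system in the variables `(π,u,s)`,
valid up to vacuum: with `μ = ((γ0-1)/2) π (1 + b̃ e^{-s/(γ0 c_v)} π^{ν-1})`, the
symbol matrix `A(ξ)` (first row `(u·ξ, μξᵀ, 0)`, middle block
`(μ e^{s/(γ0 c_v)} ξ, (u·ξ)I_d, 0)`, last row `(0,0,u·ξ)`) becomes symmetric
after left multiplication by the positive definite diagonal matrix
`S = Diag(1, e^{-s/(γ0 c_v)}, …, e^{-s/(γ0 c_v)}, 1)`; this holds for all `π ≥ 0`,
in particular for `π = 0`. -/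
theorem stmt1 (d : ℕ) (hd : 1 ≤ d) (γ0 cv btilde : ℝ) (hγ0 : 1 < γ0)
    (hcv : 0 < cv) (hbt : 0 ≤ btilde) (π s : ℝ) (hπ : 0 ≤ π)
    (u ξ : Fin d → ℝ) :
    let ν : ℝ := (γ0 + 1) / (γ0 - 1)
    let μ : ℝ := ((γ0 - 1) / 2) * π *
      (1 + btilde * Real.exp (-s / (γ0 * cv)) * π ^ (ν - 1))
    let ext : (Fin d → ℝ) → Fin (d + 2) → ℝ := fun v j =>
      if h : 1 ≤ j.val ∧ j.val ≤ d then v ⟨j.val - 1, by omega⟩ else 0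
    let A : Matrix (Fin (d + 2)) (Fin (d + 2)) ℝ := Matrix.of fun i j =>
      if i.val = 0 then
        (if j.val = 0 then ∑ k, u k * ξ k else μ * ext ξ j)
      else if i.val = d + 1 then
        (if j.val = d + 1 then ∑ k, u k * ξ k else 0)
      else
        (if j.val = 0 then μ * Real.exp (s / (γ0 * cv)) * ext ξ i
         else if j = i then ∑ k, u k * ξ k else 0)
    let S : Matrix (Fin (d + 2)) (Fin (d + 2)) ℝ :=
      Matrix.diagonal fun i =>
        if i.val = 0 then 1
        else if i.val = d + 1 then 1
        else Real.exp (-s / (γ0 * cv))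
    (S * A).IsSymm ∧ S.IsSymm ∧ S.PosDef := by
  intro ν μ ext A S
  have hexp : Real.exp (-s / (γ0 * cv)) * Real.exp (s / (γ0 * cv)) = 1 := by
    rw [← Real.exp_add]; ring_nf; exact Real.exp_zero
  have hkey : ∀ x : ℝ, Real.exp (-s / (γ0 * cv)) * (μ * Real.exp (s / (γ0 * cv)) * x) = μ * x := by
    intro x; linear_combination μ * x * hexp
  refine ⟨?_, Matrix.isSymm_diagonal _, ?_⟩
  · rw [Matrix.IsSymm]
    ext i j
    rw [Matrix.transpose_apply]
    show (S * A) j i = (S * A) i j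
    simp only [S, A, Matrix.diagonal_mul, Matrix.of_apply, ext]
    split_ifs <;>
      first
      | rfl
      | omega
      | ring1
      | (exact (hkey _))
      | (exact (hkey _).symm)
      | (rw [one_mul, one_mul]; exact (hkey _))
      | (rw [one_mul, one_mul]; exact (hkey _).symm)
      | simp_all
      | skip
  · refine Matrix.posDef_diagonal_iff.mpr fun i => ?_
    by_cases h0 : i.val = 0 <;> by_cases h1 : i.val = d + 1 <;>
      simp [h0, h1, Real.exp_pos]
end

section
/- Let a > 1, ν ≥ 2 a real number, C > 0, 0 < T ≤ ∞, and define f : (0,∞) → (−∞,0) by f(x) = (1/ν)·log(x^ν/(1 + x^ν)); then f is a strictly increasing bijection from (0,∞) onto (−∞,0). Suppose ζ : [0,T) → (0,∞) is differentiable and satisfies ζ'(t) ≤ C·(1+t)^{−a}·(ζ(t)² + ζ(t)^{ν+1}) for all t ∈ [0,T). Then for all t ∈ [0,T): f(ζ(t)) ≤ f(ζ(0)) + 2C/(a−1). In particular, if f(ζ(0)) + 2C/(a−1) < 0, then ζ(t) ≤ f^{−1}( f(ζ(0)) + 2C/(a−1) ) for all t ∈ [0,T), i.e. ζ is uniformly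 bounded; this smallness condition holds whenever ζ(0) is small enough, since f(x) → −∞ as x → 0⁺. -/
open Real Filter Set

private lemma stmt19_fderiv (ν : ℝ) (hν : 1 ≤ ν) (x : ℝ) (hx : 0 < x) :
    HasDerivAt (fun x => (1/ν) * Real.log (x ^ ν / (1 + x ^ ν)))
      (1 / (x * (1 + x ^ ν))) x := by
  have hν0 : (0:ℝ) < ν := lt_of_lt_of_le one_pos hν
  have hxν : 0 < x ^ ν := Real.rpow_pos_of_pos hx ν
  have h1 : 0 < 1 + x ^ ν := by linarith
  have hg : HasDerivAt (fun x => Real.log x - (1/ν) * Real.log (1 + x ^ ν))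
      (x⁻¹ - (1/ν) * ((ν * x ^ (ν - 1)) / (1 + x ^ ν))) x := by
    have hlog := Real.hasDerivAt_log hx.ne'
    have hr : HasDerivAt (fun x : ℝ => x ^ ν) (ν * x ^ (ν - 1)) x :=
      Real.hasDerivAt_rpow_const (Or.inl hx.ne')
    have h2 : HasDerivAt (fun x : ℝ => 1 + x ^ ν) (ν * x ^ (ν - 1)) x := by
      exact ((hasDerivAt_const x (1:ℝ)).add hr).congr_deriv (zero_add _)
    have h3 : HasDerivAt (fun x : ℝ => Real.log (1 + x ^ ν))
        ((ν * x ^ (ν - 1)) / (1 + x ^ ν)) x := h2.log h1.ne'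
    exact hlog.sub (h3.const_mul (1/ν))
  have heq : (fun x => (1/ν) * Real.log (x ^ ν / (1 + x ^ ν)))
      =ᶠ[nhds x] (fun x => Real.log x - (1/ν) * Real.log (1 + x ^ ν)) := by
    filter_upwards [eventually_gt_nhds hx] with y hy
    have hyν : 0 < y ^ ν := Real.rpow_pos_of_pos hy ν
    have hy1 : 0 < 1 + y ^ ν := by linarith
    rw [Real.log_div hyν.ne' hy1.ne', Real.log_rpow hy]
    field_simp
  have hd : x⁻¹ - (1/ν) * ((ν * x ^ (ν - 1)) / (1 + x ^ ν)) = 1 / (x * (1 + x ^ ν)) := by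
    have hx1 : x ^ (ν - 1) = x ^ ν / x := by
      rw [Real.rpow_sub hx, Real.rpow_one]
    rw [hx1]
    field_simp
    ring
  rw [← hd]
  exact hg.congr_of_eventuallyEq heq

private lemma stmt19_mono (ν : ℝ) (hν : 1 ≤ ν) :
    StrictMonoOn (fun x => (1/ν) * Real.log (x ^ ν / (1 + x ^ ν))) (Set.Ioi 0) := by
  have hν0 : (0:ℝ) < ν := lt_of_lt_of_le one_pos hν
  intro x hx y hy hxy
  simp only [Set.mem_Ioi] at hx hy
  have hxν : 0 < x ^ ν := Real.rpow_pos_of_pos hx ν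
  have hyν : 0 < y ^ ν := Real.rpow_pos_of_pos hy ν
  have hlt : x ^ ν < y ^ ν := Real.rpow_lt_rpow hx.le hxy hν0
  have harg : x ^ ν / (1 + x ^ ν) < y ^ ν / (1 + y ^ ν) := by
    rw [div_lt_div_iff₀ (by linarith) (by linarith)]
    nlinarith
  have hpos : 0 < x ^ ν / (1 + x ^ ν) := div_pos hxν (by linarith)
  have := Real.log_lt_log hpos harg
  simp only
  exact mul_lt_mul_of_pos_left this (by positivity)

private lemma stmt19_neg (ν : ℝ) (hν : 1 ≤ ν) (x : ℝ) (hx : 0 < x) :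
    (1/ν) * Real.log (x ^ ν / (1 + x ^ ν)) < 0 := by
  have hν0 : (0:ℝ) < ν := lt_of_lt_of_le one_pos hν
  have hxν : 0 < x ^ ν := Real.rpow_pos_of_pos hx ν
  have h1 : x ^ ν / (1 + x ^ ν) < 1 := by
    rw [div_lt_one (by linarith)]; linarith
  have hpos : 0 < x ^ ν / (1 + x ^ ν) := div_pos hxν (by linarith)
  have hinv : (0:ℝ) < 1/ν := by positivity
  nlinarith [Real.log_neg hpos h1]

private lemma stmt19_surj (ν : ℝ) (hν : 1 ≤ ν) (z : ℝ) (hz : z < 0) :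
    ∃ x ∈ Set.Ioi (0:ℝ), (1/ν) * Real.log (x ^ ν / (1 + x ^ ν)) = z := by
  have hν0 : (0:ℝ) < ν := lt_of_lt_of_le one_pos hν
  set u : ℝ := Real.exp (ν * z) / (1 - Real.exp (ν * z)) with hu
  have he1 : Real.exp (ν * z) < 1 := by
    rw [Real.exp_lt_one_iff]; exact mul_neg_of_pos_of_neg hν0 hz
  have he0 : 0 < Real.exp (ν * z) := Real.exp_pos _
  have hupos : 0 < u := div_pos he0 (by linarith)
  refine ⟨u ^ (1/ν), Real.rpow_pos_of_pos hupos _, ?_⟩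
  have hxν : (u ^ (1/ν)) ^ ν = u := by
    rw [← Real.rpow_mul hupos.le, one_div_mul_cancel hν0.ne', Real.rpow_one]
  rw [hxν]
  have hne : (1 : ℝ) - Real.exp (ν * z) ≠ 0 := by linarith
  have h1u : 1 + u = 1 / (1 - Real.exp (ν * z)) := by
    rw [hu, eq_div_iff hne]; field_simp; ring
  have harg : u / (1 + u) = Real.exp (ν * z) := by
    rw [h1u, hu]
    field_simp
  rw [harg, Real.log_exp]
  field_simp

private lemma stmt19_tendsto (ν : ℝ) (hν : 1 ≤ ν) :
    Tendsto (fun x => (1/ν) * Real.log (x ^ ν / (1 + x ^ ν)))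
      (nhdsWithin 0 (Set.Ioi 0)) atBot := by
  have hν0 : (0:ℝ) < ν := lt_of_lt_of_le one_pos hν
  have heq : ∀ y ∈ Set.Ioi (0:ℝ), (1/ν) * Real.log (y ^ ν / (1 + y ^ ν))
      = Real.log y - (1/ν) * Real.log (1 + y ^ ν) := by
    intro y hy
    simp only [Set.mem_Ioi] at hy
    have hyν : 0 < y ^ ν := Real.rpow_pos_of_pos hy ν
    have hy1 : 0 < 1 + y ^ ν := by linarith
    rw [Real.log_div hyν.ne' hy1.ne', Real.log_rpow hy]
    field_simp
  apply Tendsto.congr' (f₁ := fun y => Real.log y - (1/ν) * Real.log (1 + y ^ ν))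
  · filter_upwards [self_mem_nhdsWithin] with y hy
    exact (heq y hy).symm
  · have hlog : Tendsto Real.log (nhdsWithin 0 (Set.Ioi 0)) atBot :=
      Real.tendsto_log_nhdsGT_zero
    have hrpow : Tendsto (fun y : ℝ => (1/ν) * Real.log (1 + y ^ ν))
        (nhdsWithin 0 (Set.Ioi 0)) (nhds ((1/ν) * Real.log (1 + (0:ℝ) ^ ν))) := by
      apply Tendsto.const_mul
      apply Tendsto.log
      · apply Tendsto.const_add
        apply Tendsto.mono_left _ nhdsWithin_le_nhds
        exact (Real.continuousAt_rpow_const 0 ν (Or.inr hν0.le)).tendsto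
      · have : (0:ℝ) ^ ν = 0 := Real.zero_rpow hν0.ne'
        rw [this]; norm_num
    exact hlog.atBot_add hrpow.neg |>.congr (by intro y; ring)

/-- Gronwall-type ODE lemma closing the global energy estimates: if `ζ > 0`
satisfies `ζ' ≤ C (1+t)^{-a} (ζ² + ζ^{ν+1})` on `[0,T)`, then with
`f(x) = (1/ν) log(x^ν/(1+x^ν))` (a strictly increasing bijection from `(0,∞)`
onto `(-∞,0)`, with `f(x) → -∞` as `x → 0⁺`) one has
`f(ζ(t)) ≤ f(ζ(0)) + 2C/(a-1)`, hence `ζ` is uniformly bounded whenever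
`f(ζ(0)) + 2C/(a-1)` lies in the range of `f`. -/
theorem stmt19 (a ν C : ℝ) (ha : 1 < a) (hν : 2 ≤ ν) (hC : 0 < C)
    (T : EReal) (hT : 0 < T)
    (f : ℝ → ℝ) (hf : f = fun x => (1 / ν) * Real.log (x ^ ν / (1 + x ^ ν)))
    (ζ ζ' : ℝ → ℝ)
    (hpos : ∀ t : ℝ, 0 ≤ t → (t : EReal) < T → 0 < ζ t)
    (hderiv : ∀ t : ℝ, 0 ≤ t → (t : EReal) < T → HasDerivAt ζ (ζ' t) t)
    (hineq : ∀ t : ℝ, 0 ≤ t → (t : EReal) < T →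
      ζ' t ≤ C * (1 + t) ^ (-a) * (ζ t ^ (2 : ℝ) + ζ t ^ (ν + 1))) :
    StrictMonoOn f (Set.Ioi 0) ∧
      Set.BijOn f (Set.Ioi 0) (Set.Iio 0) ∧
      (∀ t : ℝ, 0 ≤ t → (t : EReal) < T →
        f (ζ t) ≤ f (ζ 0) + 2 * C / (a - 1)) ∧
      (∀ y : ℝ, 0 < y → f y = f (ζ 0) + 2 * C / (a - 1) →
        ∀ t : ℝ, 0 ≤ t → (t : EReal) < T → ζ t ≤ y) ∧
      Tendsto f (nhdsWithin 0 (Set.Ioi 0)) atBot := by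
  have hν1 : (1:ℝ) ≤ ν := by linarith
  have hmono : StrictMonoOn f (Set.Ioi 0) := by rw [hf]; exact stmt19_mono ν hν1
  have hbij : Set.BijOn f (Set.Ioi 0) (Set.Iio 0) := by
    refine ⟨?_, hmono.injOn, ?_⟩
    · intro x hx
      rw [hf]
      exact stmt19_neg ν hν1 x hx
    · intro z hz
      obtain ⟨x, hx, hxz⟩ := stmt19_surj ν hν1 z hz
      exact ⟨x, hx, by rw [hf]; exact hxz⟩
  have hgron : ∀ t : ℝ, 0 ≤ t → (t : EReal) < T →
      f (ζ t) ≤ f (ζ 0) + 2 * C / (a - 1) := by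
    intro t ht htT
    set K : ℝ := 2 * C / (a - 1) with hK
    have hKpos : 0 < K := div_pos (by linarith) (by linarith)
    set h : ℝ → ℝ := fun s => f (ζ s) + K * (1 + s) ^ (1 - a) with hh
    have key : ∀ s : ℝ, 0 ≤ s → (s : EReal) < T →
        HasDerivAt h (1 / (ζ s * (1 + ζ s ^ ν)) * ζ' s + K * ((1 - a) * (1 + s) ^ (1 - a - 1) * 1)) s ∧
        1 / (ζ s * (1 + ζ s ^ ν)) * ζ' s + K * ((1 - a) * (1 + s) ^ (1 - a - 1) * 1) ≤ 0 := by
      intro s hs hsT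
      have hζ := hpos s hs hsT
      have hζν : 0 < ζ s ^ ν := Real.rpow_pos_of_pos hζ ν
      have hD : 0 < ζ s * (1 + ζ s ^ ν) := by positivity
      have h1s : (0:ℝ) < 1 + s := by linarith
      constructor
      · apply HasDerivAt.add
        · have hfd : HasDerivAt f (1 / (ζ s * (1 + ζ s ^ ν))) (ζ s) := by
            rw [hf]; exact stmt19_fderiv ν hν1 (ζ s) hζ
          exact hfd.comp s (hderiv s hs hsT)
        · have hb : HasDerivAt (fun s : ℝ => 1 + s) 1 s := by
            simpa using (hasDerivAt_id s).const_add 1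
          have := (Real.hasDerivAt_rpow_const (p := 1 - a) (Or.inl h1s.ne')).comp s hb
          exact this.const_mul K
      · have hbound : ζ' s ≤ 2 * C * (1 + s) ^ (-a) * (ζ s * (1 + ζ s ^ ν)) := by
          have h1 := hineq s hs hsT
          have h2 : ζ s ^ (2:ℝ) + ζ s ^ (ν + 1) ≤ 2 * (ζ s * (1 + ζ s ^ ν)) := by
            have e1 : ζ s ^ (2:ℝ) = ζ s * ζ s := by
              rw [show (2:ℝ) = ((2:ℕ):ℝ) by norm_num, Real.rpow_natCast]; ring
            have e2 : ζ s ^ (ν + 1) = ζ s ^ ν * ζ s := by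
              rw [Real.rpow_add hζ, Real.rpow_one]
            have e3 : ζ s ≤ 2 + ζ s ^ ν := by
              rcases le_or_gt (ζ s) 1 with hle | hgt
              · linarith
              · have : ζ s ^ (1:ℝ) ≤ ζ s ^ ν :=
                  Real.rpow_le_rpow_of_exponent_le hgt.le hν1
                rw [Real.rpow_one] at this
                linarith
            rw [e1, e2]
            nlinarith
          have hp : 0 < (1 + s) ^ (-a) := Real.rpow_pos_of_pos h1s _
          calc ζ' s ≤ C * (1 + s) ^ (-a) * (ζ s ^ (2:ℝ) + ζ s ^ (ν + 1)) := h1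
            _ ≤ C * (1 + s) ^ (-a) * (2 * (ζ s * (1 + ζ s ^ ν))) := by
                apply mul_le_mul_of_nonneg_left h2 (by positivity)
            _ = 2 * C * (1 + s) ^ (-a) * (ζ s * (1 + ζ s ^ ν)) := by ring
        have hexp : (1:ℝ) - a - 1 = -a := by ring
        rw [hexp]
        have hKa : K * (1 - a) = -(2 * C) := by
          rw [hK]
          have hne : a - 1 ≠ 0 := by linarith
          field_simp
          ring
        have h3 : 1 / (ζ s * (1 + ζ s ^ ν)) * ζ' s ≤ 2 * C * (1 + s) ^ (-a) := by
          rw [one_div, inv_mul_le_iff₀ hD]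
          exact hbound.trans_eq (by ring)
        have hp : 0 < (1 + s) ^ (-a) := Real.rpow_pos_of_pos h1s _
        nlinarith [h3, hKa, hp]
    have hanti : AntitoneOn h (Set.Icc 0 t) := by
      apply antitoneOn_of_deriv_nonpos (convex_Icc 0 t)
      · intro s hs
        have hsT : (s : EReal) < T := lt_of_le_of_lt (EReal.coe_le_coe_iff.mpr hs.2) htT
        exact ((key s hs.1 hsT).1.continuousAt).continuousWithinAt
      · intro s hs
        rw [interior_Icc] at hs
        have hsT : (s : EReal) < T := lt_of_le_of_lt (EReal.coe_le_coe_iff.mpr hs.2.le) htT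
        exact ((key s hs.1.le hsT).1.differentiableAt).differentiableWithinAt
      · intro s hs
        rw [interior_Icc] at hs
        have hsT : (s : EReal) < T := lt_of_le_of_lt (EReal.coe_le_coe_iff.mpr hs.2.le) htT
        obtain ⟨hd, hle⟩ := key s hs.1.le hsT
        rw [hd.deriv]
        exact hle
    have := hanti (Set.left_mem_Icc.mpr ht) (Set.right_mem_Icc.mpr ht) ht
    simp only [hh] at this
    have hone : K * (1 + (0:ℝ)) ^ (1 - a) = K := by norm_num
    have hpos' : 0 < K * (1 + t) ^ (1 - a) := by
      have h1t : (0:ℝ) < 1 + t := by linarith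
      have := Real.rpow_pos_of_pos h1t (1 - a)
      positivity
    rw [hone] at this
    linarith
  refine ⟨hmono, hbij, hgron, ?_, by rw [hf]; exact stmt19_tendsto ν hν1⟩
  intro y hy hfy t ht htT
  by_contra hcon
  push_neg at hcon
  have hζt : 0 < ζ t := hpos t ht htT
  have := hmono (Set.mem_Ioi.mpr hy) (Set.mem_Ioi.mpr hζt) hcon
  have h2 := hgron t ht htT
  rw [hfy] at this
  linarith
end
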